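/- Let T be the (q+1)-regular tree, z ∉ {−1,0,1} with q < |z|² (in fact q < z² in the sense that |q/z²| < 1), μ a finitely additive measure on Ω, and f = P_z(μ). Then for every vertex x with m = d(o,x) ≥ 1, μ(Ω(x)) = ((z²−q)/(z²−1)) · lim_{k→∞} z^{−(m+k)} Σ_{y ∈ S_k(x)} f(y), where S_k(x) = {y : d(x,y) = k, x ∈ [o,y]}. -/

import Mathlib

open SimpleGraph

variable {V : Type*}

/-- The type of directed edges of a graph. -/
def DEdge (G : SimpleGraph V) : Type _ := {p : V × V // G.Adj p.1 p.2}

/-- Initial vertex of a directed edge. -/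
def DEdge.ini {G : SimpleGraph V} (e : DEdge G) : V := e.1.1

/-- Terminal vertex of a directed edge. -/
def DEdge.ter {G : SimpleGraph V} (e : DEdge G) : V := e.1.2

/-- Orientation reversal of a directed edge. -/
def DEdge.op {G : SimpleGraph V} (e : DEdge G) : DEdge G := ⟨(e.1.2, e.1.1), e.2.symm⟩

/-- The sum of an edge function over all directed edges with initial vertex `x`. -/
noncomputable def edgeSum (G : SimpleGraph V) (x : V) (F : DEdge G → ℂ) : ℂ :=
  ∑ᶠ (e : DEdge G) (_ : e.ini = x), F e

/-- The space `L(E⃗)`: edge functions `F` with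
`F(e⃗) + F(e⃗^op) = z = Σ_{ι(e⃗')=x} F(e⃗')` for some common `z`. -/
def memL (G : SimpleGraph V) (F : DEdge G → ℂ) : Prop :=
  ∃ z : ℂ, (∀ e : DEdge G, F e + F e.op = z) ∧ (∀ x : V, edgeSum G x F = z)

/-- A directed edge points away from the base point `o`. -/
def PointsAway (G : SimpleGraph V) (o : V) (e : DEdge G) : Prop :=
  G.dist o e.ter = G.dist o e.ini + 1

/-- The directed edges pointing away from `o`. -/
def DEdgeAway (G : SimpleGraph V) (o : V) : Type _ := {e : DEdge G // PointsAway G o e}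

/-- Sum of a function on away-pointing edges over the edges with initial vertex `x`. -/
noncomputable def edgeSumAway (G : SimpleGraph V) (o : V) (x : V)
    (F : DEdgeAway G o → ℂ) : ℂ :=
  ∑ᶠ (e : DEdgeAway G o) (_ : e.1.ini = x), F e

/-- The space `L(E⃗_o)`: functions on away-pointing edges with
`F(e⃗) = Σ_{ι(e⃗')=τ(e⃗)} F(e⃗')`. -/
def memLAway (G : SimpleGraph V) (o : V) (F : DEdgeAway G o → ℂ) : Prop :=
  ∀ e : DEdgeAway G o, F e = edgeSumAway G o e.1.ter F

/-- The boundary `Ω` of the tree, realized as the set of geodesic rays based at `o`. -/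
def Ray (G : SimpleGraph V) (o : V) : Type _ :=
  {r : ℕ → V // r 0 = o ∧ (∀ n, G.Adj (r n) (r (n + 1))) ∧ ∀ n, G.dist o (r n) = n}

/-- `Ω_o(v)`: the ends whose ray from `o` passes through `v`. -/
def raysThrough (G : SimpleGraph V) (o v : V) : Set (Ray G o) :=
  {ω | ∃ n, ω.1 n = v}

/-- The natural (compact, totally disconnected) topology on the boundary,
generated by the sets `Ω_o(v)`. -/
instance rayTopology (G : SimpleGraph V) (o : V) : TopologicalSpace (Ray G o) :=
  TopologicalSpace.generateFrom {S | ∃ v : V, S = raysThrough G o v}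

/-- `∂₊ e⃗`: the set of ends reachable through the directed edge `e⃗`. -/
def dplus (G : SimpleGraph V) (o : V) (e : DEdge G) : Set (Ray G o) :=
  {ω | ∃ N, ∀ n ≥ N, G.dist e.ter (ω.1 n) + 1 = G.dist e.ini (ω.1 n)}

/-- A finitely additive measure on the clopen subsets of a space. -/
def IsFAMeasure {Z : Type*} [TopologicalSpace Z] (μ : Set Z → ℂ) : Prop :=
  μ ∅ = 0 ∧ ∀ U U' : Set Z, IsClopen U → IsClopen U' →
    μ (U ∪ U') + μ (U ∩ U') = μ U + μ U'

/-- The tree Laplacian: the average of `f` over the neighbors of `x`. -/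
noncomputable def lap (G : SimpleGraph V) [G.LocallyFinite] (f : V → ℂ) (x : V) : ℂ :=
  (G.degree x : ℂ)⁻¹ * ∑ y ∈ G.neighborFinset x, f y

/-- The horocycle bracket `⟨·,·⟩ : X × Ω → ℤ` for base point `o`: the eventual
value of `n - d(x, ω_n)` along the ray `ω`. -/
def IsHorocycleBracket (G : SimpleGraph V) (o : V) (brk : V → Ray G o → ℤ) : Prop :=
  ∀ (x : V) (ω : Ray G o), ∃ N : ℕ, ∀ n : ℕ, n ≥ N → brk x ω = (n : ℤ) - (G.dist x (ω.1 n) : ℤ)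

/-- The Poisson transform `P_z(μ)(x) = ∫_Ω z^{⟨x,ω⟩} dμ(ω)`, i.e. the pairing of
`μ` with the locally constant function `ω ↦ z^{⟨x,ω⟩}`. -/
noncomputable def poisson (G : SimpleGraph V) (o : V) (brk : V → Ray G o → ℤ)
    (z : ℂ) (μ : Set (Ray G o) → ℂ) (x : V) : ℂ :=
  ∑ᶠ c : ℂ, c * μ {ω : Ray G o | z ^ brk x ω = c}

open Filter Topology


section Aux
open scoped Classical
namespace TreeAux

variable {V : Type*} {G : SimpleGraph V}

/-- In a tree, every path realizes the distance. -/
lemma path_length_eq_dist (ht : G.IsTree) {u v : V} (p : G.Walk u v) (hp : p.IsPath) :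
    p.length = G.dist u v := by
  obtain ⟨p', hp', hl'⟩ := ht.isConnected.exists_path_of_dist u v
  obtain ⟨q, -, hq⟩ := ht.existsUnique_path u v
  have : p = p' := (hq p hp).trans (hq p' hp').symm
  rw [this, hl']

lemma dist_adj (ht : G.IsTree) {u v : V} (h : G.Adj u v) : G.dist u v = 1 :=
  dist_eq_one_iff_adj.mpr h

/-- Splitting: a vertex on a path splits the distance. -/
lemma dist_add_of_mem_support (ht : G.IsTree) {a b c : V} (p : G.Walk a b) (hp : p.IsPath)
    (hc : c ∈ p.support) : G.dist a c + G.dist c b = G.dist a b := by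
  have h1 := path_length_eq_dist ht (p.takeUntil c hc) (hp.takeUntil hc)
  have h2 := path_length_eq_dist ht (p.dropUntil c hc) (hp.dropUntil hc)
  have h3 := path_length_eq_dist ht p hp
  rw [← h1, ← h2, ← h3, ← SimpleGraph.Walk.length_append, SimpleGraph.Walk.take_spec]

/-- Converse of splitting: if distances add up, the vertex lies on the path. -/
lemma mem_support_of_dist_add (ht : G.IsTree) {a b c : V} (p : G.Walk a b) (hp : p.IsPath)
    (h : G.dist a c + G.dist c b = G.dist a b) : c ∈ p.support := by
  obtain ⟨q1, hq1, hl1⟩ := ht.isConnected.exists_path_of_dist a c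
  obtain ⟨q2, hq2, hl2⟩ := ht.isConnected.exists_path_of_dist c b
  have hw : (q1.append q2).length = G.dist a b := by
    rw [SimpleGraph.Walk.length_append, hl1, hl2, h]
  have hpth : (q1.append q2).IsPath := SimpleGraph.Walk.isPath_of_length_eq_dist _ hw
  obtain ⟨q, -, hq⟩ := ht.existsUnique_path a b
  have heq : p = q1.append q2 := (hq p hp).trans (hq (q1.append q2) hpth).symm
  rw [heq]
  simp [SimpleGraph.Walk.mem_support_append_iff]

/-- membership characterization for a neighbor. -/
lemma closer_iff_mem (ht : G.IsTree) {u w y : V} (h : G.Adj u w) :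
    (G.dist y w + 1 = G.dist y u) ↔
      ∀ p : G.Walk y u, p.IsPath → w ∈ p.support := by
  have e1 : G.dist w u = 1 := dist_adj ht h.symm
  constructor
  · intro hd p hp
    apply mem_support_of_dist_add ht p hp
    omega
  · intro hmem
    obtain ⟨p, hp, hl⟩ := ht.isConnected.exists_path_of_dist y u
    have := dist_add_of_mem_support ht p hp (hmem p hp)
    omega

/-- Adjacent vertices have distances (to any point) differing by exactly one. -/
lemma dist_succ_or_pred (ht : G.IsTree) (y : V) {u w : V} (h : G.Adj u w) :
    G.dist y w = G.dist y u + 1 ∨ G.dist y w + 1 = G.dist y u := by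
  have e1 : G.dist u w = 1 := dist_adj ht h
  have e2 : G.dist w u = 1 := dist_adj ht h.symm
  have t1 : G.dist y w ≤ G.dist y u + G.dist u w := ht.isConnected.dist_triangle
  have t2 : G.dist y u ≤ G.dist y w + G.dist w u := ht.isConnected.dist_triangle
  rcases Nat.lt_trichotomy (G.dist y w) (G.dist y u) with hlt | heq | hgt
  · right; omega
  · exfalso
    obtain ⟨p, hp, hl⟩ := ht.isConnected.exists_path_of_dist y u
    have hw : w ∉ p.support := by
      intro hmem
      have := dist_add_of_mem_support ht p hp hmem
      have hne : G.dist w u ≠ 0 := by omega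
      omega
    have hp2 : (SimpleGraph.Walk.cons h.symm p.reverse).IsPath := by
      rw [SimpleGraph.Walk.cons_isPath_iff]
      exact ⟨hp.reverse, by simpa using hw⟩
    have hlen := path_length_eq_dist ht _ hp2
    simp only [SimpleGraph.Walk.length_cons, SimpleGraph.Walk.length_reverse] at hlen
    rw [hl] at hlen
    rw [dist_comm (u := w) (v := y)] at hlen
    omega
  · left; omega

end TreeAux

namespace TreeAux

variable {V : Type*} {G : SimpleGraph V}


/-- distance zero implies equality in a connected graph. -/
lemma eq_of_dist_zero (ht : G.IsTree) {a b : V} (h : G.dist a b = 0) : a = b :=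
  ht.isConnected.dist_eq_zero_iff.mp h

/-- Lemma G: if `w` is a child of `u` (relative to `o`) and `y` is strictly closer to `w`,
then `y` lies beyond `w`. -/
lemma beyond_of_closer (ht : G.IsTree) {o u w y : V} (h : G.Adj u w)
    (hw : G.dist o w = G.dist o u + 1) (hy : G.dist y w + 1 = G.dist y u) :
    G.dist o y = G.dist o w + G.dist w y := by
  obtain ⟨Q, hQ, hQl⟩ := ht.isConnected.exists_path_of_dist o w
  obtain ⟨B, hB, hBl⟩ := ht.isConnected.exists_path_of_dist w y
  have huQ : u ∈ Q.support := by
    refine (closer_iff_mem ht h.symm).mp ?_ Q hQ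
    omega
  -- key claim: the two paths meet only in w
  have key : ∀ a, a ∈ Q.support → a ∈ B.support → a = w := by
    intro a haQ haB
    by_contra hne
    have s1 : G.dist o a + G.dist a w = G.dist o w := dist_add_of_mem_support ht Q hQ haQ
    have s2 : G.dist w a + G.dist a y = G.dist w y := dist_add_of_mem_support ht B hB haB
    -- a is on the segment from o to u (or equals w, excluded)
    have hsplit : G.dist o a + G.dist a u = G.dist o u := by
      have hspec := SimpleGraph.Walk.take_spec Q huQ
      have haQ' : a ∈ ((Q.takeUntil u huQ).append (Q.dropUntil u huQ)).support := by
        rw [hspec]; exact haQ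
      rw [SimpleGraph.Walk.mem_support_append_iff] at haQ'
      rcases haQ' with h1 | h1
      · exact dist_add_of_mem_support ht _ (hQ.takeUntil huQ) h1
      · -- dropUntil is the path from u to w, whose support is {u, w}
        have hd : (Q.dropUntil u huQ).IsPath := hQ.dropUntil huQ
        have := dist_add_of_mem_support ht _ hd h1
        have e1 : G.dist u w = 1 := dist_adj ht h
        have haw : G.dist a w = 0 ∨ G.dist u a = 0 := by omega
        rcases haw with h0 | h0
        · exact absurd (eq_of_dist_zero ht h0) hne
        · have : u = a := eq_of_dist_zero ht h0
          subst this
          simp [SimpleGraph.dist_self]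
    have e1 : G.dist u w = 1 := dist_adj ht h
    have t1 : G.dist a w ≤ G.dist a u + G.dist u w := ht.isConnected.dist_triangle
    have t2 : G.dist y u ≤ G.dist y a + G.dist a u := ht.isConnected.dist_triangle
    have c1 : G.dist y a = G.dist a y := dist_comm
    have c2 : G.dist y w = G.dist w y := dist_comm
    have c3 : G.dist w a = G.dist a w := dist_comm
    omega
  -- the concatenation is a path
  have hpath : (Q.append B).IsPath := by
    rw [SimpleGraph.Walk.isPath_def, SimpleGraph.Walk.support_append, List.nodup_append]
    refine ⟨hQ.support_nodup, ?_, ?_⟩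
    · exact hB.support_nodup.sublist (List.tail_sublist _)
    · intro a haQ b haB hab
      subst hab
      have haB' : a ∈ B.support := List.mem_of_mem_tail haB
      have : a = w := key a haQ haB'
      subst this
      have hnd := hB.support_nodup
      rw [SimpleGraph.Walk.support_eq_cons] at hnd
      exact (List.nodup_cons.mp hnd).1 haB
  have := path_length_eq_dist ht _ hpath
  rw [SimpleGraph.Walk.length_append, hQl, hBl] at this
  omega

/-- Lemma H: if `w` is a child of `u` relative to `o`, and `y ≠ w` is at level at most
that of `w`, then `w` is farther from `y` than `u` is. -/
lemma dist_child (ht : G.IsTree) {o u w y : V} (h : G.Adj u w)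
    (hw : G.dist o w = G.dist o u + 1) (hy : G.dist o y ≤ G.dist o w) (hne : y ≠ w) :
    G.dist y w = G.dist y u + 1 := by
  rcases dist_succ_or_pred ht y h with h1 | h1
  · exact h1
  · exfalso
    have := beyond_of_closer ht h hw h1
    have : G.dist w y ≠ 0 := fun h0 => hne (eq_of_dist_zero ht h0).symm
    omega

/-- Two vertices on a path at the same distance from the start are equal. -/
lemma eq_of_dist_eq_on_path (ht : G.IsTree) {y v a b : V} (p : G.Walk y v) (hp : p.IsPath)
    (ha : a ∈ p.support) (hb : b ∈ p.support) (hd : G.dist y a = G.dist y b) : a = b := by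
  have hspec := SimpleGraph.Walk.take_spec p ha
  have hb' : b ∈ ((p.takeUntil a ha).append (p.dropUntil a ha)).support := by
    rw [hspec]; exact hb
  rw [SimpleGraph.Walk.mem_support_append_iff] at hb'
  have sa : G.dist y a + G.dist a v = G.dist y v := dist_add_of_mem_support ht p hp ha
  have sb : G.dist y b + G.dist b v = G.dist y v := dist_add_of_mem_support ht p hp hb
  rcases hb' with h1 | h1
  · have := dist_add_of_mem_support ht _ (hp.takeUntil ha) h1
    have : G.dist b a = 0 := by omega
    exact (eq_of_dist_zero ht this).symm
  · have := dist_add_of_mem_support ht _ (hp.dropUntil ha) h1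
    have : G.dist a b = 0 := by omega
    exact eq_of_dist_zero ht this

/-- Uniqueness of the neighbor closer to `y`. -/
lemma unique_closer (ht : G.IsTree) {y v u₁ u₂ : V} (h1 : G.Adj v u₁) (h2 : G.Adj v u₂)
    (hd1 : G.dist y u₁ + 1 = G.dist y v) (hd2 : G.dist y u₂ + 1 = G.dist y v) : u₁ = u₂ := by
  obtain ⟨p, hp, hl⟩ := ht.isConnected.exists_path_of_dist y v
  have m1 : u₁ ∈ p.support := (closer_iff_mem ht h1).mp hd1 p hp
  have m2 : u₂ ∈ p.support := (closer_iff_mem ht h2).mp hd2 p hp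
  exact eq_of_dist_eq_on_path ht p hp m1 m2 (by omega)

/-- Existence of a neighbor closer to `y`. -/
lemma exists_closer (ht : G.IsTree) {y v : V} (hne : v ≠ y) :
    ∃ u, G.Adj v u ∧ G.dist y u + 1 = G.dist y v := by
  obtain ⟨p, hp, hl⟩ := ht.isConnected.exists_path_of_dist y v
  have hrev : p.reverse.IsPath := hp.reverse
  cases hr : p.reverse with
  | nil =>
    exfalso
    have : p.reverse.length = 0 := by rw [hr]; rfl
    rw [SimpleGraph.Walk.length_reverse, hl] at this
    exact hne (eq_of_dist_zero ht (dist_comm.trans this)).symm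
  | cons hadj q =>
    rename_i u
    refine ⟨u, hadj, ?_⟩
    rw [hr] at hrev
    have hq : q.IsPath := (SimpleGraph.Walk.cons_isPath_iff _ _).mp hrev |>.1
    have hql := path_length_eq_dist ht q hq
    have : p.reverse.length = q.length + 1 := by rw [hr]; simp
    rw [SimpleGraph.Walk.length_reverse, hl] at this
    rw [dist_comm (u := y) (v := u), ← hql]
    omega

end TreeAux

namespace TreeAux

variable {V : Type*}

/-- The sphere of radius `n` about `o`. -/
def sph (G : SimpleGraph V) (o : V) (n : ℕ) : Set V := {v | G.dist o v = n}

lemma sph_finite {G : SimpleGraph V} (ht : G.IsTree) [G.LocallyFinite] (o : V) (n : ℕ) :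
    (sph G o n).Finite := by
  induction n with
  | zero =>
    apply Set.Finite.subset (Set.finite_singleton o)
    intro v hv
    exact Set.mem_singleton_iff.mpr (eq_of_dist_zero ht hv).symm
  | succ n ih =>
    apply Set.Finite.subset (Set.Finite.biUnion ih (fun u _ => (G.neighborSet u).toFinite))
    intro v hv
    have hv' : G.dist o v = n + 1 := hv
    have hvo : v ≠ o := by
      intro h; subst h
      simp only [SimpleGraph.dist_self] at hv'
      omega
    obtain ⟨u, hadj, hd⟩ := exists_closer ht hvo
    refine Set.mem_biUnion (show u ∈ sph G o n from ?_) (show v ∈ G.neighborSet u from hadj.symm)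
    show G.dist o u = n
    omega

/-- The boundary set `Ω(v)` of rays through `v`. -/
def OmegaS (G : SimpleGraph V) (o v : V) : Set (Ray G o) := {ω | ω.1 (G.dist o v) = v}

lemma raysThrough_eq (G : SimpleGraph V) (o v : V) : raysThrough G o v = OmegaS G o v := by
  ext ω
  constructor
  · rintro ⟨n, hn⟩
    have h2 := ω.2.2.2 n
    rw [hn] at h2
    show ω.1 (G.dist o v) = v
    rw [h2, hn]
  · intro h; exact ⟨G.dist o v, h⟩

lemma mem_OmegaS_self {G : SimpleGraph V} (o : V) (ω : Ray G o) (n : ℕ) :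
    ω ∈ OmegaS G o (ω.1 n) := by
  show ω.1 (G.dist o (ω.1 n)) = ω.1 n
  rw [ω.2.2.2 n]

lemma OmegaS_disjoint {G : SimpleGraph V} (o : V) {v v' : V} (hvv : v ≠ v')
    (hd : G.dist o v = G.dist o v') : OmegaS G o v ∩ OmegaS G o v' = ∅ := by
  ext ω
  simp only [Set.mem_inter_iff, Set.mem_empty_iff_false, iff_false]
  rintro ⟨h1, h2⟩
  apply hvv
  have h1' : ω.1 (G.dist o v) = v := h1
  have h2' : ω.1 (G.dist o v') = v' := h2
  rw [← h1', ← h2', hd]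

lemma OmegaS_isOpen {G : SimpleGraph V} (o v : V) : IsOpen (OmegaS G o v) := by
  rw [← raysThrough_eq]
  exact TopologicalSpace.GenerateOpen.basic _ ⟨v, rfl⟩

lemma OmegaS_isClopen {G : SimpleGraph V} (o v : V) : IsClopen (OmegaS G o v) := by
  refine ⟨?_, OmegaS_isOpen o v⟩
  rw [← isOpen_compl_iff]
  have hc : (OmegaS G o v)ᶜ = ⋃ w ∈ {w | G.dist o w = G.dist o v ∧ w ≠ v}, OmegaS G o w := by
    ext ω
    simp only [Set.mem_compl_iff, Set.mem_iUnion, Set.mem_setOf_eq]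
    constructor
    · intro h
      refine ⟨ω.1 (G.dist o v), ⟨ω.2.2.2 _, ?_⟩, mem_OmegaS_self o ω _⟩
      intro he; exact h (by rw [← he]; exact mem_OmegaS_self o ω _)
    · rintro ⟨w, ⟨hd, hne⟩, hw⟩ hv
      have hmem : ω ∈ OmegaS G o w ∩ OmegaS G o v := ⟨hw, hv⟩
      rw [OmegaS_disjoint o hne hd] at hmem
      exact hmem
  rw [hc]
  exact isOpen_biUnion (fun w _ => OmegaS_isOpen o w)

/-- Finite additivity over a finite disjoint family of clopen sets. -/
lemma meas_biUnion {Z : Type*} [TopologicalSpace Z] {μ : Set Z → ℂ} (hμ : IsFAMeasure μ)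
    {ι : Type*} (s : Finset ι) (A : ι → Set Z) (hA : ∀ i ∈ s, IsClopen (A i))
    (hd : ∀ i ∈ s, ∀ j ∈ s, i ≠ j → A i ∩ A j = ∅) :
    IsClopen (⋃ i ∈ s, A i) ∧ μ (⋃ i ∈ s, A i) = ∑ i ∈ s, μ (A i) := by
  classical
  induction s using Finset.cons_induction with
  | empty =>
    refine ⟨by simpa using isClopen_empty, ?_⟩
    simpa using hμ.1
  | cons a s ha ih =>
    obtain ⟨hcl, hsum⟩ := ih (fun i hi => hA i (Finset.mem_cons_of_mem hi))
      (fun i hi j hj hij => hd i (Finset.mem_cons_of_mem hi) j (Finset.mem_cons_of_mem hj) hij)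
    have hAa : IsClopen (A a) := hA a (Finset.mem_cons_self a s)
    have hU : (⋃ i ∈ Finset.cons a s ha, A i) = A a ∪ ⋃ i ∈ s, A i := by
      rw [Finset.cons_eq_insert, Finset.set_biUnion_insert]
    have hint : A a ∩ (⋃ i ∈ s, A i) = ∅ := by
      ext zpt
      simp only [Set.mem_inter_iff, Set.mem_iUnion, Set.mem_empty_iff_false, iff_false]
      rintro ⟨hza, i, hi, hzi⟩
      have h0 := hd a (Finset.mem_cons_self a s) i (Finset.mem_cons_of_mem hi)
        (fun he => ha (he ▸ hi))
      have : zpt ∈ A a ∩ A i := ⟨hza, hzi⟩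
      rw [h0] at this
      exact this
    refine ⟨hU ▸ hAa.union hcl, ?_⟩
    have hadd := hμ.2 (A a) (⋃ i ∈ s, A i) hAa hcl
    rw [hint, hμ.1] at hadd
    rw [hU, Finset.sum_cons, ← hsum]
    linear_combination hadd

end TreeAux


namespace TreeAux

variable {V : Type*}

lemma ray_step {G : SimpleGraph V} (ht : G.IsTree) {o : V} (y : V) (ω : Ray G o) {j : ℕ}
    (hj : G.dist o y ≤ j) : G.dist y (ω.1 (j + 1)) = G.dist y (ω.1 j) + 1 := by
  have d1 : G.dist o (ω.1 j) = j := ω.2.2.2 j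
  have d2 : G.dist o (ω.1 (j + 1)) = j + 1 := ω.2.2.2 (j + 1)
  have hw' : G.dist o (ω.1 (j + 1)) = G.dist o (ω.1 j) + 1 := by omega
  have hy' : G.dist o y ≤ G.dist o (ω.1 (j + 1)) := by omega
  have hne : y ≠ ω.1 (j + 1) := fun he => by rw [← he] at d2; omega
  exact dist_child ht (ω.2.2.1 j) hw' hy' hne

lemma ray_dist {G : SimpleGraph V} (ht : G.IsTree) {o : V} (y : V) (ω : Ray G o) {R : ℕ}
    (hR : G.dist o y ≤ R) (k : ℕ) :
    G.dist y (ω.1 (R + k)) = G.dist y (ω.1 R) + k := by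
  induction k with
  | zero => simp
  | succ k ih =>
    have hs := ray_step ht y ω (j := R + k) (le_trans hR (Nat.le_add_right R k))
    have he : R + (k + 1) = (R + k) + 1 := rfl
    rw [he, hs, ih]
    omega

lemma brk_eq {G : SimpleGraph V} (ht : G.IsTree) {o : V} {brk : V → Ray G o → ℤ}
    (hbrk : IsHorocycleBracket G o brk) {y : V} {R : ℕ} (hR : G.dist o y ≤ R) (ω : Ray G o) :
    brk y ω = (R : ℤ) - (G.dist y (ω.1 R) : ℤ) := by
  obtain ⟨N, hN⟩ := hbrk y ω
  have h1 := hN (R + N) (by omega)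
  have h2 := ray_dist ht y ω hR N
  rw [h2] at h1
  push_cast at h1 ⊢
  omega

/-- The Poisson transform written as a finite sum over a sphere of radius `R`. -/
lemma poisson_formula {G : SimpleGraph V} (ht : G.IsTree) [G.LocallyFinite] {o : V}
    {brk : V → Ray G o → ℤ} (hbrk : IsHorocycleBracket G o brk) (z : ℂ)
    {μ : Set (Ray G o) → ℂ} (hμ : IsFAMeasure μ) {y : V} {R : ℕ} (hR : G.dist o y ≤ R) :
    poisson G o brk z μ y
      = ∑ v ∈ (sph_finite ht o R).toFinset,
          z ^ ((R : ℤ) - (G.dist y v : ℤ)) * μ (OmegaS G o v) := by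
  classical
  set S := (sph_finite ht o R).toFinset with hS
  set g : V → ℂ := fun v => z ^ ((R : ℤ) - (G.dist y v : ℤ)) with hg
  have hmemS : ∀ v, v ∈ S ↔ G.dist o v = R := by
    intro v; rw [hS, Set.Finite.mem_toFinset]; exact Iff.rfl
  have hlevel : ∀ c : ℂ, {ω : Ray G o | z ^ brk y ω = c}
      = ⋃ v ∈ S.filter (fun v => g v = c), OmegaS G o v := by
    intro c
    ext ω
    simp only [Set.mem_setOf_eq, Set.mem_iUnion, Finset.mem_filter, exists_prop]
    constructor
    · intro h
      refine ⟨ω.1 R, ⟨(hmemS _).mpr (ω.2.2.2 R), ?_⟩, mem_OmegaS_self o ω R⟩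
      rw [hg]
      simp only
      rw [← h, brk_eq ht hbrk hR ω]
    · rintro ⟨v, ⟨hv, hc⟩, hω⟩
      have hvR : G.dist o v = R := (hmemS _).mp hv
      have hωR : ω.1 R = v := by
        have : ω.1 (G.dist o v) = v := hω
        rwa [hvR] at this
      rw [brk_eq ht hbrk hR ω, hωR, ← hc]
  have hmeas : ∀ c : ℂ, μ {ω : Ray G o | z ^ brk y ω = c}
      = ∑ v ∈ S.filter (fun v => g v = c), μ (OmegaS G o v) := by
    intro c
    rw [hlevel c]
    exact (meas_biUnion hμ _ _ (fun v _ => OmegaS_isClopen o v)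
      (fun i hi j hj hij => OmegaS_disjoint o hij
        (by rw [(hmemS i).mp (Finset.mem_filter.mp hi).1, (hmemS j).mp (Finset.mem_filter.mp hj).1]))).2
  have hsupp : (Function.support fun c : ℂ => c * μ {ω : Ray G o | z ^ brk y ω = c})
      ⊆ ↑(S.image g) := by
    intro c hc
    simp only [Function.mem_support] at hc
    by_contra hcon
    have : S.filter (fun v => g v = c) = ∅ := by
      rw [Finset.filter_eq_empty_iff]
      intro v hv he
      exact hcon (by rw [Finset.mem_coe]; exact Finset.mem_image.mpr ⟨v, hv, he⟩)
    rw [hmeas c, this] at hc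
    simp at hc
  rw [poisson, finsum_eq_sum_of_support_subset _ hsupp]
  rw [← Finset.sum_fiberwise_of_maps_to (g := g) (t := S.image g)
    (fun v hv => Finset.mem_image_of_mem g hv) (fun v => g v * μ (OmegaS G o v))]
  apply Finset.sum_congr rfl
  intro c hc
  rw [hmeas c, Finset.mul_sum]
  apply Finset.sum_congr rfl
  intro v hv
  rw [(Finset.mem_filter.mp hv).2]

end TreeAux


namespace TreeAux

variable {V : Type*}

/-- Pointwise neighbor-sum identity for the Poisson kernel. -/
lemma kernel_sum {G : SimpleGraph V} (ht : G.IsTree) [G.LocallyFinite] {q : ℕ}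
    (hreg : ∀ v : V, G.degree v = q + 1) {z : ℂ} (hz0 : z ≠ 0) (R : ℤ) {v₀ w : V}
    (hne : v₀ ≠ w) :
    ∑ u ∈ G.neighborFinset v₀, z ^ (R - (G.dist u w : ℤ))
      = (z + q * z⁻¹) * z ^ (R - (G.dist v₀ w : ℤ)) := by
  classical
  obtain ⟨p, hadj, hp⟩ := exists_closer ht hne
  have hpN : p ∈ G.neighborFinset v₀ := by
    rw [SimpleGraph.mem_neighborFinset]; exact hadj
  have hfar : ∀ u ∈ (G.neighborFinset v₀).erase p, G.dist w u = G.dist w v₀ + 1 := by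
    intro u hu
    obtain ⟨hup, huN⟩ := Finset.mem_erase.mp hu
    have huadj : G.Adj v₀ u := (SimpleGraph.mem_neighborFinset _ _ _).mp huN
    rcases dist_succ_or_pred ht w huadj with h1 | h1
    · exact h1
    · exact absurd (unique_closer ht huadj hadj h1 hp) hup
  have hcard : ((G.neighborFinset v₀).erase p).card = q := by
    rw [Finset.card_erase_of_mem hpN, SimpleGraph.card_neighborFinset_eq_degree, hreg]
    omega
  rw [← Finset.add_sum_erase _ _ hpN]
  have hsum2 : ∑ u ∈ (G.neighborFinset v₀).erase p, z ^ (R - (G.dist u w : ℤ))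
      = q * z ^ (R - (G.dist v₀ w : ℤ) - 1) := by
    have hterm : ∀ u ∈ (G.neighborFinset v₀).erase p,
        z ^ (R - (G.dist u w : ℤ)) = z ^ (R - (G.dist v₀ w : ℤ) - 1) := by
      intro u hu
      congr 1
      have := hfar u hu
      have c1 : G.dist w u = G.dist u w := SimpleGraph.dist_comm
      have c2 : G.dist w v₀ = G.dist v₀ w := SimpleGraph.dist_comm
      omega
    rw [Finset.sum_congr rfl hterm, Finset.sum_const, hcard, nsmul_eq_mul]
  rw [hsum2]
  have hpw : (G.dist p w : ℤ) = (G.dist v₀ w : ℤ) - 1 := by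
    have c1 : G.dist w p = G.dist p w := SimpleGraph.dist_comm
    have c2 : G.dist w v₀ = G.dist v₀ w := SimpleGraph.dist_comm
    omega
  rw [hpw]
  have e1 : R - ((G.dist v₀ w : ℤ) - 1) = (R - G.dist v₀ w) + 1 := by ring
  have e2 : R - (G.dist v₀ w : ℤ) - 1 = (R - G.dist v₀ w) + (-1) := by ring
  rw [e1, e2, zpow_add₀ hz0, zpow_add₀ hz0, zpow_one, zpow_neg_one]
  ring

/-- The Poisson transform is an eigenfunction of the neighbor-sum operator. -/
lemma eigen {G : SimpleGraph V} (ht : G.IsTree) [G.LocallyFinite] {q : ℕ}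
    (hreg : ∀ v : V, G.degree v = q + 1) {o : V} {brk : V → Ray G o → ℤ}
    (hbrk : IsHorocycleBracket G o brk) {z : ℂ} (hz0 : z ≠ 0)
    {μ : Set (Ray G o) → ℂ} (hμ : IsFAMeasure μ) (v₀ : V) :
    ∑ u ∈ G.neighborFinset v₀, poisson G o brk z μ u
      = (z + q * z⁻¹) * poisson G o brk z μ v₀ := by
  classical
  set R : ℕ := G.dist o v₀ + 1 with hR
  have hv₀R : G.dist o v₀ ≤ R := by omega
  have huR : ∀ u ∈ G.neighborFinset v₀, G.dist o u ≤ R := by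
    intro u hu
    have huadj : G.Adj v₀ u := (SimpleGraph.mem_neighborFinset _ _ _).mp hu
    rcases dist_succ_or_pred ht o huadj with h1 | h1 <;> omega
  rw [Finset.sum_congr rfl (fun u hu => poisson_formula ht hbrk z hμ (huR u hu))]
  rw [poisson_formula ht hbrk z hμ hv₀R, Finset.sum_comm, Finset.mul_sum]
  apply Finset.sum_congr rfl
  intro w hw
  have hwR : G.dist o w = R := by
    have := (Set.Finite.mem_toFinset (sph_finite ht o R)).mp hw
    exact this
  have hnew : v₀ ≠ w := by
    intro h; rw [← h] at hwR; omega
  rw [← Finset.sum_mul, kernel_sum ht hreg hz0 (R : ℤ) hnew]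
  ring

end TreeAux


namespace TreeAux

variable {V : Type*}

/-- The parent of a vertex relative to `o`. -/
noncomputable def pa {G : SimpleGraph V} (ht : G.IsTree) (o v : V) : V :=
  if h : v = o then v else Classical.choose (exists_closer ht (y := o) h)

lemma pa_spec {G : SimpleGraph V} (ht : G.IsTree) {o v : V} (hv : v ≠ o) :
    G.Adj v (pa ht o v) ∧ G.dist o (pa ht o v) + 1 = G.dist o v := by
  rw [pa, dif_neg hv]
  exact Classical.choose_spec (exists_closer ht (y := o) hv)

lemma pa_eq {G : SimpleGraph V} (ht : G.IsTree) {o v p : V} (h : G.Adj v p)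
    (hd : G.dist o p + 1 = G.dist o v) : pa ht o v = p := by
  have hv : v ≠ o := by
    intro he; subst he
    simp only [SimpleGraph.dist_self] at hd
    omega
  obtain ⟨h1, h2⟩ := pa_spec ht hv
  exact unique_closer ht h1 h h2 hd

/-- The children of a vertex relative to `o`. -/
noncomputable def chl (G : SimpleGraph V) [G.LocallyFinite] (o v : V) : Finset V :=
  (G.neighborFinset v).filter (fun u => G.dist o u = G.dist o v + 1)

lemma mem_chl {G : SimpleGraph V} [G.LocallyFinite] {o v u : V} :
    u ∈ chl G o v ↔ G.Adj v u ∧ G.dist o u = G.dist o v + 1 := by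
  rw [chl, Finset.mem_filter, SimpleGraph.mem_neighborFinset]

lemma pa_of_mem_chl {G : SimpleGraph V} [G.LocallyFinite] (ht : G.IsTree) {o v u : V}
    (hu : u ∈ chl G o v) : pa ht o u = v := by
  obtain ⟨hadj, hd⟩ := mem_chl.mp hu
  exact pa_eq ht hadj.symm (by omega)

lemma chl_eq_erase {G : SimpleGraph V} [G.LocallyFinite] (ht : G.IsTree) {o v : V}
    (hv : v ≠ o) : chl G o v = (G.neighborFinset v).erase (pa ht o v) := by
  obtain ⟨hadj, hd⟩ := pa_spec ht hv
  ext u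
  rw [mem_chl, Finset.mem_erase, SimpleGraph.mem_neighborFinset]
  constructor
  · rintro ⟨h1, h2⟩
    refine ⟨?_, h1⟩
    intro he; subst he
    omega
  · rintro ⟨hne, h1⟩
    refine ⟨h1, ?_⟩
    rcases dist_succ_or_pred ht o h1 with h2 | h2
    · exact h2
    · exact absurd (pa_eq ht h1 h2).symm hne

lemma chl_card {G : SimpleGraph V} [G.LocallyFinite] (ht : G.IsTree) {q : ℕ}
    (hreg : ∀ v : V, G.degree v = q + 1) {o v : V} (hv : v ≠ o) :
    (chl G o v).card = q := by
  obtain ⟨hadj, -⟩ := pa_spec ht hv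
  rw [chl_eq_erase ht hv, Finset.card_erase_of_mem (by
    rw [SimpleGraph.mem_neighborFinset]; exact hadj),
    SimpleGraph.card_neighborFinset_eq_degree, hreg]
  omega

/-- Closed form for a two-term linear recurrence. -/
lemma closed_form {F : ℕ → ℂ} {a b : ℂ} (hab : a ≠ b)
    (hrec : ∀ k, F (k + 2) = (a + b) * F (k + 1) - a * b * F k) :
    ∀ k, F k = ((F 1 - b * F 0) / (a - b)) * a ^ k
        + ((a * F 0 - F 1) / (a - b)) * b ^ k := by
  have hab' : a - b ≠ 0 := sub_ne_zero.mpr hab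
  intro k
  induction k using Nat.twoStepInduction with
  | zero => field_simp; ring
  | one => field_simp; ring
  | more k ih1 ih2 =>
    rw [hrec k, ih1, ih2]
    field_simp
    ring

end TreeAux


namespace TreeAux

variable {V : Type*}

/-- The forward sphere `S_k(x)`. -/
def SS (G : SimpleGraph V) (o x : V) (k : ℕ) : Set V :=
  {y | G.dist x y = k ∧ G.dist o x + G.dist x y = G.dist o y}

lemma SS_finite {G : SimpleGraph V} (ht : G.IsTree) [G.LocallyFinite] (o x : V) (k : ℕ) :
    (SS G o x k).Finite := by
  apply (sph_finite ht o (G.dist o x + k)).subset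
  rintro y ⟨h1, h2⟩
  show G.dist o y = G.dist o x + k
  omega

/-- `S_k(x)` as a finset. -/
noncomputable def SF {G : SimpleGraph V} (ht : G.IsTree) [G.LocallyFinite] (o x : V)
    (k : ℕ) : Finset V := (SS_finite ht o x k).toFinset

lemma mem_SF {G : SimpleGraph V} {ht : G.IsTree} [G.LocallyFinite] {o x y : V} {k : ℕ} :
    y ∈ SF ht o x k ↔ G.dist x y = k ∧ G.dist o x + G.dist x y = G.dist o y := by
  rw [SF, Set.Finite.mem_toFinset]; exact Iff.rfl

lemma SF_zero {G : SimpleGraph V} (ht : G.IsTree) [G.LocallyFinite] (o x : V) :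
    SF ht o x 0 = {x} := by
  ext y
  rw [mem_SF, Finset.mem_singleton]
  constructor
  · rintro ⟨h1, h2⟩
    exact (eq_of_dist_zero ht h1).symm
  · rintro rfl
    simp [SimpleGraph.dist_self]

lemma SF_succ {G : SimpleGraph V} (ht : G.IsTree) [G.LocallyFinite] (o x : V) (k : ℕ) :
    SF ht o x (k + 1) = (SF ht o x k).biUnion (chl G o) := by
  ext y
  rw [mem_SF, Finset.mem_biUnion]
  constructor
  · rintro ⟨h1, h2⟩
    have hyo : y ≠ o := by
      intro he; subst he
      simp only [SimpleGraph.dist_self] at h2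
      omega
    obtain ⟨hadj, hd⟩ := pa_spec ht hyo
    refine ⟨pa ht o y, mem_SF.mpr ⟨?_, ?_⟩, mem_chl.mpr ⟨hadj.symm, by omega⟩⟩
    · have hxy : x ≠ y := by
        intro he; subst he
        omega
      have := dist_child ht (o := o) hadj.symm (by omega) (by omega) hxy
      omega
    · have hxy : x ≠ y := by
        intro he; subst he
        omega
      have := dist_child ht (o := o) hadj.symm (by omega) (by omega) hxy
      omega
  · rintro ⟨v, hv, hu⟩
    obtain ⟨h1, h2⟩ := mem_SF.mp hv
    obtain ⟨hadj, hd⟩ := mem_chl.mp hu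
    have hxu : x ≠ y := by
      intro he; subst he
      omega
    have := dist_child ht (o := o) hadj (by omega) (by omega) hxu
    constructor <;> omega

lemma SF_pairwiseDisjoint {G : SimpleGraph V} (ht : G.IsTree) [G.LocallyFinite] (o x : V)
    (k : ℕ) : (↑(SF ht o x k) : Set V).PairwiseDisjoint (chl G o) := by
  intro v hv v' hv' hne
  rw [Function.onFun, Finset.disjoint_left]
  intro u hu hu'
  obtain ⟨h1, h2⟩ := mem_chl.mp hu
  obtain ⟨h1', h2'⟩ := mem_chl.mp hu'
  have hvS := mem_SF.mp (Finset.mem_coe.mp hv)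
  have hvS' := mem_SF.mp (Finset.mem_coe.mp hv')
  exact hne (unique_closer ht (y := o) h1.symm h1'.symm (by omega) (by omega))

end TreeAux

end Aux

/-- Let `T` be the `(q+1)`-regular tree, `z ∉ {-1,0,1}` with `q < z²` in the
sense `|q/z²| < 1`, `μ` a finitely additive measure on `Ω`, and `f = P_z(μ)`.
For every vertex `x` with `m = d(o,x) ≥ 1`,
`μ(Ω(x)) = ((z²-q)/(z²-1)) · lim_{k→∞} z^{-(m+k)} Σ_{y ∈ S_k(x)} f(y)`,
where `S_k(x) = {y : d(x,y) = k, x ∈ [o,y]}`. -/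
theorem stmt_18 {V : Type*} (G : SimpleGraph V) (htree : G.IsTree) [G.LocallyFinite]
    (q : ℕ) (hreg : ∀ v : V, G.degree v = q + 1)
    (o : V) (brk : V → Ray G o → ℤ) (hbrk : IsHorocycleBracket G o brk)
    (z : ℂ) (hz0 : z ≠ 0) (hz1 : z ≠ 1) (hzm1 : z ≠ -1)
    (hq : ‖(q : ℂ) / z ^ 2‖ < 1)
    (μ : Set (Ray G o) → ℂ) (hμ : IsFAMeasure μ)
    (x : V) (hm : 1 ≤ G.dist o x) :
    Tendsto
      (fun k : ℕ =>
        z ^ (-((G.dist o x : ℤ) + (k : ℤ)))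
          * ∑ᶠ y ∈ {y : V | G.dist x y = k ∧ G.dist o x + G.dist x y = G.dist o y},
              poisson G o brk z μ y)
      atTop
      (𝓝 (((z ^ 2 - 1) / (z ^ 2 - (q : ℂ))) * μ (raysThrough G o x))) := by
  classical
  set f : V → ℂ := poisson G o brk z μ with hf_def
  set F : ℕ → ℂ := fun k => ∑ y ∈ TreeAux.SF htree o x k, f y with hF_def
  have hxo : x ≠ o := by
    intro he; subst he
    simp [SimpleGraph.dist_self] at hm
  -- nonvanishing facts
  have hzq : z ^ 2 - (q : ℂ) ≠ 0 := by
    intro h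
    have hq' : (q : ℂ) = z ^ 2 := by linear_combination -h
    rw [hq', div_self (pow_ne_zero 2 hz0)] at hq
    simp at hq
  have hab' : z - (q : ℂ) * z⁻¹ ≠ 0 := by
    intro h
    apply hzq
    have h2 : (z - (q : ℂ) * z⁻¹) * z = 0 := by rw [h, zero_mul]
    rw [sub_mul, mul_assoc, inv_mul_cancel₀ hz0, mul_one] at h2
    linear_combination h2
  have hab : z ≠ (q : ℂ) * z⁻¹ := sub_ne_zero.mp hab'
  -- the statement's finsum equals F
  have hsum_eq : ∀ k : ℕ,
      (∑ᶠ y ∈ {y : V | G.dist x y = k ∧ G.dist o x + G.dist x y = G.dist o y},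
        poisson G o brk z μ y) = F k := by
    intro k
    rw [show {y : V | G.dist x y = k ∧ G.dist o x + G.dist x y = G.dist o y}
        = TreeAux.SS G o x k from rfl,
      finsum_mem_eq_finite_toFinset_sum _ (TreeAux.SS_finite htree o x k)]
    rfl
  -- membership facts
  have hne_o : ∀ k : ℕ, ∀ y ∈ TreeAux.SF htree o x k, y ≠ o := by
    intro k y hy he
    obtain ⟨h1, h2⟩ := TreeAux.mem_SF.mp hy
    subst he
    simp only [SimpleGraph.dist_self] at h2
    omega
  -- neighbor sums over children
  have hchl : ∀ v : V, v ≠ o →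
      ∑ u ∈ TreeAux.chl G o v, f u = (z + q * z⁻¹) * f v - f (TreeAux.pa htree o v) := by
    intro v hv
    rw [TreeAux.chl_eq_erase htree hv,
      Finset.sum_erase_eq_sub (by
        rw [SimpleGraph.mem_neighborFinset]; exact (TreeAux.pa_spec htree hv).1),
      hf_def, TreeAux.eigen htree hreg hbrk hz0 hμ v]
  have hFsucc : ∀ k : ℕ, F (k + 1)
      = ∑ v ∈ TreeAux.SF htree o x k, ((z + q * z⁻¹) * f v - f (TreeAux.pa htree o v)) := by
    intro k
    rw [hF_def]
    simp only
    rw [TreeAux.SF_succ htree o x k,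
      Finset.sum_biUnion (TreeAux.SF_pairwiseDisjoint htree o x k)]
    exact Finset.sum_congr rfl (fun v hv => hchl v (hne_o k v hv))
  have hpa_sum : ∀ k : ℕ,
      ∑ v ∈ TreeAux.SF htree o x (k + 1), f (TreeAux.pa htree o v) = q * F k := by
    intro k
    rw [TreeAux.SF_succ htree o x k,
      Finset.sum_biUnion (TreeAux.SF_pairwiseDisjoint htree o x k), hF_def]
    simp only
    rw [Finset.mul_sum]
    apply Finset.sum_congr rfl
    intro p hp
    rw [Finset.sum_congr rfl
        (fun u hu => by rw [TreeAux.pa_of_mem_chl htree hu] :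
          ∀ u ∈ TreeAux.chl G o p, f (TreeAux.pa htree o u) = f p),
      Finset.sum_const, TreeAux.chl_card htree hreg (hne_o k p hp), nsmul_eq_mul]
  -- the recurrence
  have hrec : ∀ k : ℕ, F (k + 2)
      = (z + (q : ℂ) * z⁻¹) * F (k + 1) - z * ((q : ℂ) * z⁻¹) * F k := by
    intro k
    have h1 := hFsucc (k + 1)
    rw [Finset.sum_sub_distrib, ← Finset.mul_sum, hpa_sum k] at h1
    have hzz : z * ((q : ℂ) * z⁻¹) = q := by
      rw [mul_comm ((q : ℂ)) z⁻¹, ← mul_assoc, mul_inv_cancel₀ hz0, one_mul]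
    rw [h1, hzz, hF_def]
  -- base values
  have hF0 : F 0 = f x := by
    rw [hF_def]; simp only
    rw [TreeAux.SF_zero htree o x, Finset.sum_singleton]
  have hF1 : F 1 = (z + q * z⁻¹) * f x - f (TreeAux.pa htree o x) := by
    have := hFsucc 0
    rwa [TreeAux.SF_zero htree o x, Finset.sum_singleton] at this
  -- the value of f at the parent of x
  have hpadj : G.Adj x (TreeAux.pa htree o x) := (TreeAux.pa_spec htree hxo).1
  have hpd : G.dist o (TreeAux.pa htree o x) + 1 = G.dist o x := (TreeAux.pa_spec htree hxo).2
  have hpx : f (TreeAux.pa htree o x)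
      = z * f x + (z ^ ((G.dist o x : ℤ) - 1) - z ^ ((G.dist o x : ℤ) + 1))
          * μ (TreeAux.OmegaS G o x) := by
    have hxf : f x = ∑ v ∈ (TreeAux.sph_finite htree o (G.dist o x)).toFinset,
        z ^ ((G.dist o x : ℤ) - (G.dist x v : ℤ)) * μ (TreeAux.OmegaS G o v) :=
      TreeAux.poisson_formula htree hbrk z hμ le_rfl
    have hpf : f (TreeAux.pa htree o x)
        = ∑ v ∈ (TreeAux.sph_finite htree o (G.dist o x)).toFinset,
          z ^ ((G.dist o x : ℤ) - (G.dist (TreeAux.pa htree o x) v : ℤ))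
            * μ (TreeAux.OmegaS G o v) :=
      TreeAux.poisson_formula htree hbrk z hμ (by omega)
    have hxS : x ∈ (TreeAux.sph_finite htree o (G.dist o x)).toFinset := by
      rw [Set.Finite.mem_toFinset]
      exact rfl
    have hterm : ∀ v ∈ (TreeAux.sph_finite htree o (G.dist o x)).toFinset,
        z ^ ((G.dist o x : ℤ) - (G.dist (TreeAux.pa htree o x) v : ℤ))
            * μ (TreeAux.OmegaS G o v)
          = z * (z ^ ((G.dist o x : ℤ) - (G.dist x v : ℤ)) * μ (TreeAux.OmegaS G o v))
            + (if v = x then (z ^ ((G.dist o x : ℤ) - 1) - z ^ ((G.dist o x : ℤ) + 1))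
                * μ (TreeAux.OmegaS G o x) else 0) := by
      intro v hv
      have hvS : G.dist o v = G.dist o x := by
        have := (Set.Finite.mem_toFinset (TreeAux.sph_finite htree o (G.dist o x))).mp hv
        exact this
      by_cases hvx : v = x
      · subst hvx
        rw [if_pos rfl]
        have hd1 : G.dist (TreeAux.pa htree o v) v = 1 :=
          TreeAux.dist_adj htree hpadj.symm
        rw [hd1, SimpleGraph.dist_self]
        push_cast
        rw [show (G.dist o v : ℤ) - 0 = (G.dist o v : ℤ) by ring]
        rw [show z * (z ^ ((G.dist o v : ℤ)) * μ (TreeAux.OmegaS G o v))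
            = z ^ ((G.dist o v : ℤ) + 1) * μ (TreeAux.OmegaS G o v) by
          rw [zpow_add_one₀ hz0]; ring]
        ring
      · rw [if_neg hvx]
        have hdc := TreeAux.dist_child htree (o := o) (y := v) hpadj.symm (by omega) (by omega) hvx
        have c1 : G.dist v x = G.dist x v := SimpleGraph.dist_comm
        have c2 : G.dist v (TreeAux.pa htree o x) = G.dist (TreeAux.pa htree o x) v :=
          SimpleGraph.dist_comm
        have hexp : (G.dist o x : ℤ) - (G.dist (TreeAux.pa htree o x) v : ℤ)
            = ((G.dist o x : ℤ) - (G.dist x v : ℤ)) + 1 := by omega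
        rw [hexp, zpow_add_one₀ hz0, add_zero]
        ring
    rw [hpf, Finset.sum_congr rfl hterm, Finset.sum_add_distrib, ← Finset.mul_sum, ← hxf,
      Finset.sum_ite_eq' _ x, if_pos hxS]
  -- closed form
  have hcf := TreeAux.closed_form hab hrec
  set A : ℂ := (F 1 - (q : ℂ) * z⁻¹ * F 0) / (z - (q : ℂ) * z⁻¹) with hA_def
  set B : ℂ := (z * F 0 - F 1) / (z - (q : ℂ) * z⁻¹) with hB_def
  -- numerator simplification
  have hnum : F 1 - (q : ℂ) * z⁻¹ * F 0
      = (z ^ ((G.dist o x : ℤ) + 1) - z ^ ((G.dist o x : ℤ) - 1))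
          * μ (TreeAux.OmegaS G o x) := by
    rw [hF1, hF0, hpx]
    ring
  -- per-term rewrite of the sequence
  have hseq : ∀ k : ℕ, z ^ (-((G.dist o x : ℤ) + (k : ℤ))) * F k
      = z ^ (-(G.dist o x : ℤ)) * A
        + (z ^ (-(G.dist o x : ℤ)) * B) * ((q : ℂ) / z ^ 2) ^ k := by
    intro k
    rw [hcf k]
    have e1 : z ^ (-((G.dist o x : ℤ) + (k : ℤ)))
        = z ^ (-(G.dist o x : ℤ)) * (z⁻¹) ^ k := by
      rw [show -((G.dist o x : ℤ) + (k : ℤ)) = -(G.dist o x : ℤ) + (-(k : ℤ)) by ring,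
        zpow_add₀ hz0]
      congr 1
      rw [zpow_neg, zpow_natCast]
      exact (inv_pow z k).symm
    have e2 : (z⁻¹) ^ k * z ^ k = 1 := by
      rw [← mul_pow, inv_mul_cancel₀ hz0, one_pow]
    have e3 : (z⁻¹) ^ k * ((q : ℂ) * z⁻¹) ^ k = ((q : ℂ) / z ^ 2) ^ k := by
      rw [← mul_pow]
      congr 1
      rw [div_eq_mul_inv, sq, mul_inv]
      ring
    rw [e1]
    linear_combination (z ^ (-(G.dist o x : ℤ)) * A) * e2
      + (z ^ (-(G.dist o x : ℤ)) * B) * e3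
  -- identify the limit value
  have hCval : ((z ^ 2 - 1) / (z ^ 2 - (q : ℂ))) * μ (raysThrough G o x)
      = z ^ (-(G.dist o x : ℤ)) * A := by
    rw [TreeAux.raysThrough_eq, hA_def, hnum]
    have e4 : z ^ (-(G.dist o x : ℤ)) * z ^ ((G.dist o x : ℤ) + 1) = z := by
      rw [← zpow_add₀ hz0, show -(G.dist o x : ℤ) + ((G.dist o x : ℤ) + 1) = 1 by ring,
        zpow_one]
    have e5 : z ^ (-(G.dist o x : ℤ)) * z ^ ((G.dist o x : ℤ) - 1) = z⁻¹ := by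
      rw [← zpow_add₀ hz0, show -(G.dist o x : ℤ) + ((G.dist o x : ℤ) - 1) = -1 by ring,
        zpow_neg_one]
    have e6 : (z - z⁻¹) / (z - (q : ℂ) * z⁻¹) = (z ^ 2 - 1) / (z ^ 2 - (q : ℂ)) := by
      rw [div_eq_div_iff hab' hzq]
      field_simp
    calc ((z ^ 2 - 1) / (z ^ 2 - (q : ℂ))) * μ (TreeAux.OmegaS G o x)
        = ((z - z⁻¹) / (z - (q : ℂ) * z⁻¹)) * μ (TreeAux.OmegaS G o x) := by rw [e6]
      _ = z ^ (-(G.dist o x : ℤ))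
          * ((z ^ ((G.dist o x : ℤ) + 1) - z ^ ((G.dist o x : ℤ) - 1))
              * μ (TreeAux.OmegaS G o x) / (z - (q : ℂ) * z⁻¹)) := by
          linear_combination (-(μ (TreeAux.OmegaS G o x)) / (z - (q : ℂ) * z⁻¹)) * e4
            + (μ (TreeAux.OmegaS G o x) / (z - (q : ℂ) * z⁻¹)) * e5
  -- conclude via the geometric limit
  have hr : ‖(q : ℂ) / z ^ 2‖ < 1 := hq
  have hgeo := tendsto_pow_atTop_nhds_zero_of_norm_lt_one hr
  have htend : Filter.Tendsto
      (fun k : ℕ => z ^ (-(G.dist o x : ℤ)) * A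
        + (z ^ (-(G.dist o x : ℤ)) * B) * ((q : ℂ) / z ^ 2) ^ k)
      Filter.atTop (nhds (z ^ (-(G.dist o x : ℤ)) * A)) := by
    have := Filter.Tendsto.const_mul (z ^ (-(G.dist o x : ℤ)) * B) hgeo
    simpa using (tendsto_const_nhds (x := z ^ (-(G.dist o x : ℤ)) * A)).add this
  rw [hCval]
  refine Filter.Tendsto.congr (fun k => ?_) htend
  rw [← hseq k, hsum_eq k]
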